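/- The explicit velocity field v̄ together with the pressure P₀ is a solution of the 3D incompressible Navier–Stokes equations on [0,T*) × ℝ³: for every ν ≥ 0 and all t ∈ [0,T*), x ∈ ℝ³, ∂_t v̄ + (v̄·∇)v̄ + ∇P₀ = ν Δv̄ and ∇·v̄ = 0. -/

import Mathlib

/-- Partial derivative of `f : ℝ³ → ℝ` in the `j`-th coordinate direction at `x`. -/
noncomputable def pd (f : (Fin 3 → ℝ) → ℝ) (j : Fin 3) (x : Fin 3 → ℝ) : ℝ :=
  deriv (fun s => f (Function.update x j s)) (x j)

/-- Laplacian of `f : ℝ³ → ℝ` at `x`. -/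
noncomputable def lap (f : (Fin 3 → ℝ) → ℝ) (x : Fin 3 → ℝ) : ℝ :=
  ∑ j : Fin 3, pd (fun y => pd f j y) j x

/-- The explicit blowup velocity field `v̄`. -/
noncomputable def vbar (T a k : ℝ) (t : ℝ) (x : Fin 3 → ℝ) : Fin 3 → ℝ :=
  ![a * x 0 / (T - t) + k * x 1 * (T - t) ^ (2 * a),
    a * x 1 / (T - t) - k * x 0 * (T - t) ^ (2 * a),
    -2 * a * x 2 / (T - t)]

/-- The explicit blowup magnetic field `H̄`. -/
noncomputable def Hbar (T a ab k : ℝ) (t : ℝ) (x : Fin 3 → ℝ) : Fin 3 → ℝ :=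
  ![ab * x 0 + 2 * ab * k * x 1 * x 2 * (T - t) ^ (2 * a + 1) / (4 * a + 1),
    ab * x 1 - 2 * ab * k * x 0 * x 2 * (T - t) ^ (2 * a + 1) / (4 * a + 1),
    -2 * ab * x 2]

/-- The explicit Navier–Stokes pressure `P₀`. -/
noncomputable def P0 (T a k : ℝ) (t : ℝ) (x : Fin 3 → ℝ) : ℝ :=
  ((x 0) ^ 2 + (x 1) ^ 2) / 2 * (k ^ 2 * (T - t) ^ (4 * a) - a * (a + 1) / (T - t) ^ 2)
    + a * (1 - 2 * a) * (x 2) ^ 2 / (T - t) ^ 2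

theorem deriv_hmul (c : ℝ) : deriv (HMul.hMul c) = fun _ => c := by
  funext y; simpa using ((hasDerivAt_id y).const_mul c).deriv

theorem deriv_sub_mul (c d k y : ℝ) :
    deriv (fun s => c - k * s * d) y = -(k * d) := by
  simpa using ((((hasDerivAt_id y).const_mul k).mul_const d).const_sub c).deriv

theorem deriv_mul_div_sub (a T c y : ℝ) :
    deriv (fun s => a * s / T - c) y = a / T := by
  simpa using ((((hasDerivAt_id y).const_mul a).div_const T).sub_const c).deriv

/-- `(v̄, P₀)` solves the 3D incompressible Navier–Stokes
equations on `[0,T*) × ℝ³` for every `ν ≥ 0`. -/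
theorem vbar_navier_stokes_solution (T a k : ℝ) (hT : 0 < T) (hk : k ≠ 0) (ha : a ≠ 0) :
    ∀ ν : ℝ, 0 ≤ ν →
    ∀ t ∈ Set.Ico (0 : ℝ) T, ∀ x : Fin 3 → ℝ,
      (∀ i : Fin 3,
        deriv (fun s => vbar T a k s x i) t
          + (∑ j : Fin 3, vbar T a k t x j * pd (fun y => vbar T a k t y i) j x)
          + pd (fun y => P0 T a k t y) i x
        = ν * lap (fun y => vbar T a k t y i) x) ∧
      (∑ j : Fin 3, pd (fun y => vbar T a k t y j) j x) = 0 := by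
  intro ν hν t ht x
  obtain ⟨ht0, htT⟩ := ht
  have hτ : (0:ℝ) < T - t := by linarith
  have hτ' : T - t ≠ 0 := hτ.ne'
  -- first partial derivatives of vbar, at arbitrary points
  have pv00 : ∀ y : Fin 3 → ℝ, pd (fun z => vbar T a k t z 0) 0 y = a / (T-t) := by
    intro y; simp [pd, vbar, Function.update, deriv_hmul]
  have pv01 : ∀ y : Fin 3 → ℝ, pd (fun z => vbar T a k t z 0) 1 y = k * (T-t)^(2*a) := by
    intro y; simp [pd, vbar, Function.update, deriv_hmul]
  have pv02 : ∀ y : Fin 3 → ℝ, pd (fun z => vbar T a k t z 0) 2 y = 0 := by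
    intro y; simp [pd, vbar, Function.update, deriv_hmul]
  have pv10 : ∀ y : Fin 3 → ℝ, pd (fun z => vbar T a k t z 1) 0 y = -(k * (T-t)^(2*a)) := by
    intro y; simp [pd, vbar, Function.update, deriv_sub_mul]
  have pv11 : ∀ y : Fin 3 → ℝ, pd (fun z => vbar T a k t z 1) 1 y = a / (T-t) := by
    intro y; simp [pd, vbar, Function.update, deriv_mul_div_sub]
  have pv12 : ∀ y : Fin 3 → ℝ, pd (fun z => vbar T a k t z 1) 2 y = 0 := by
    intro y; simp [pd, vbar, Function.update, deriv_hmul]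
  have pv20 : ∀ y : Fin 3 → ℝ, pd (fun z => vbar T a k t z 2) 0 y = 0 := by
    intro y; simp [pd, vbar, Function.update, deriv_hmul]
  have pv21 : ∀ y : Fin 3 → ℝ, pd (fun z => vbar T a k t z 2) 1 y = 0 := by
    intro y; simp [pd, vbar, Function.update, deriv_hmul]
  have pv22 : ∀ y : Fin 3 → ℝ, pd (fun z => vbar T a k t z 2) 2 y = -2 * a / (T-t) := by
    intro y; simp [pd, vbar, Function.update, deriv_hmul]
  -- partial derivatives of P0 at x
  have pP0 : pd (fun y => P0 T a k t y) 0 x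
      = x 0 * (k ^ 2 * (T - t) ^ (4 * a) - a * (a + 1) / (T - t) ^ 2) := by
    simp [pd, P0, Function.update, deriv_hmul]
  have pP1 : pd (fun y => P0 T a k t y) 1 x
      = x 1 * (k ^ 2 * (T - t) ^ (4 * a) - a * (a + 1) / (T - t) ^ 2) := by
    simp [pd, P0, Function.update, deriv_hmul]
  have pP2 : pd (fun y => P0 T a k t y) 2 x
      = 2 * (a * (1 - 2*a) * x 2) / (T - t) ^ 2 := by
    simp [pd, P0, Function.update, deriv_hmul]; ring
  -- Laplacians vanish
  have L0 : lap (fun y => vbar T a k t y 0) x = 0 := by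
    simp only [lap, Fin.sum_univ_three]
    rw [show (fun y => pd (fun z => vbar T a k t z 0) 0 y) = fun _ => a/(T-t) from funext pv00,
        show (fun y => pd (fun z => vbar T a k t z 0) 1 y) = fun _ => k*(T-t)^(2*a) from
          funext pv01,
        show (fun y => pd (fun z => vbar T a k t z 0) 2 y) = fun _ => (0:ℝ) from funext pv02]
    simp [pd]
  have L1 : lap (fun y => vbar T a k t y 1) x = 0 := by
    simp only [lap, Fin.sum_univ_three]
    rw [show (fun y => pd (fun z => vbar T a k t z 1) 0 y) = fun _ => -(k*(T-t)^(2*a)) from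
          funext pv10,
        show (fun y => pd (fun z => vbar T a k t z 1) 1 y) = fun _ => a/(T-t) from funext pv11,
        show (fun y => pd (fun z => vbar T a k t z 1) 2 y) = fun _ => (0:ℝ) from funext pv12]
    simp [pd]
  have L2 : lap (fun y => vbar T a k t y 2) x = 0 := by
    simp only [lap, Fin.sum_univ_three]
    rw [show (fun y => pd (fun z => vbar T a k t z 2) 0 y) = fun _ => (0:ℝ) from funext pv20,
        show (fun y => pd (fun z => vbar T a k t z 2) 1 y) = fun _ => (0:ℝ) from funext pv21,
        show (fun y => pd (fun z => vbar T a k t z 2) 2 y) = fun _ => -2*a/(T-t) from funext pv22]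
    simp [pd]
  -- time derivatives
  have hsub : HasDerivAt (fun s : ℝ => T - s) (0 - 1) t :=
    (hasDerivAt_const t T).sub (hasDerivAt_id t)
  have hpow : HasDerivAt (fun s : ℝ => (T - s) ^ (2*a)) ((2*a*(T-t)^(2*a-1)) * (0 - 1)) t :=
    (Real.hasDerivAt_rpow_const (Or.inl hτ')).comp t hsub
  have dt0 : deriv (fun s => vbar T a k s x 0) t
      = (0 * (T-t) - a * x 0 * (0-1)) / (T-t)^2
        + k * x 1 * ((2*a*(T-t)^(2*a-1)) * (0 - 1)) := by
    have h1 : HasDerivAt (fun s : ℝ => a * x 0 / (T - s))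
        ((0 * (T-t) - a * x 0 * (0-1)) / (T-t)^2) t :=
      (hasDerivAt_const t (a * x 0)).div hsub hτ'
    have := (h1.add (hpow.const_mul (k * x 1))).deriv
    simpa [vbar, mul_assoc, Pi.add_def] using this
  have dt1 : deriv (fun s => vbar T a k s x 1) t
      = (0 * (T-t) - a * x 1 * (0-1)) / (T-t)^2
        - k * x 0 * ((2*a*(T-t)^(2*a-1)) * (0 - 1)) := by
    have h1 : HasDerivAt (fun s : ℝ => a * x 1 / (T - s))
        ((0 * (T-t) - a * x 1 * (0-1)) / (T-t)^2) t :=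
      (hasDerivAt_const t (a * x 1)).div hsub hτ'
    have := (h1.sub (hpow.const_mul (k * x 0))).deriv
    simpa [vbar, mul_assoc, Pi.sub_def] using this
  have dt2 : deriv (fun s => vbar T a k s x 2) t
      = (0 * (T-t) - (-2) * a * x 2 * (0-1)) / (T-t)^2 := by
    have h1 : HasDerivAt (fun s : ℝ => -2 * a * x 2 / (T - s))
        ((0 * (T-t) - (-2) * a * x 2 * (0-1)) / (T-t)^2) t :=
      (hasDerivAt_const t (-2 * a * x 2)).div hsub hτ'
    simpa [vbar] using h1.deriv
  -- rpow identities
  have hA1 : (T-t)^(2*a-1) = (T-t)^(2*a) / (T-t) := by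
    rw [Real.rpow_sub hτ, Real.rpow_one]
  have hA2 : (T-t)^(4*a) = (T-t)^(2*a) * (T-t)^(2*a) := by
    rw [← Real.rpow_add hτ]; ring_nf
  constructor
  · intro i
    fin_cases i
    · simp only [Fin.sum_univ_three, Fin.zero_eta, Fin.mk_one, Fin.reduceFinMk]
      rw [dt0, pv00 x, pv01 x, pv02 x, pP0, L0]
      simp only [vbar, Matrix.cons_val_zero, Matrix.cons_val_one, Matrix.head_cons,
        Matrix.cons_val_two, Matrix.tail_cons]
      rw [hA1, hA2]
      field_simp
      ring
    · simp only [Fin.sum_univ_three, Fin.zero_eta, Fin.mk_one, Fin.reduceFinMk]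
      rw [dt1, pv10 x, pv11 x, pv12 x, pP1, L1]
      simp only [vbar, Matrix.cons_val_zero, Matrix.cons_val_one, Matrix.head_cons,
        Matrix.cons_val_two, Matrix.tail_cons]
      rw [hA1, hA2]
      field_simp
      ring
    · simp only [Fin.sum_univ_three, Fin.zero_eta, Fin.mk_one, Fin.reduceFinMk]
      rw [dt2, pv20 x, pv21 x, pv22 x, pP2, L2]
      simp only [vbar, Matrix.cons_val_zero, Matrix.cons_val_one, Matrix.head_cons,
        Matrix.cons_val_two, Matrix.tail_cons]
      field_simp
      ring
  · rw [Fin.sum_univ_three, pv00 x, pv11 x, pv22 x]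
    field_simp
    ring
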